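/- Every word that fixes all Boolean networks on n components with acyclic asynchronous graph is n-path-universal. Consequently, the fixing length of the family of n-component asynchronous-acyclic networks equals the minimum length Λ(n) of an n-path-universal word. -/

import Mathlib

/-- One asynchronous update step: replace coordinate `i` of `x` by `f x i`. -/
def updateStep {n : ℕ} (f : (Fin n → Bool) → (Fin n → Bool)) (x : Fin n → Bool)
    (i : Fin n) : Fin n → Bool :=
  Function.update x i (f x i)

/-- Action of a word on a state. -/
def applyWord {n : ℕ} (f : (Fin n → Bool) → (Fin n → Bool)) :
    List (Fin n) → (Fin n → Bool) → (Fin n → Bool)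
  | [], x => x
  | i :: w, x => applyWord f w (updateStep f x i)

/-- A word `w` fixes `f` if applying it to any state yields a fixed point of `f`. -/
def Fixes {n : ℕ} (f : (Fin n → Bool) → (Fin n → Bool)) (w : List (Fin n)) : Prop :=
  ∀ x, f (applyWord f w x) = applyWord f w x

/-- Arc of the asynchronous graph. -/
def AsyncArc {n : ℕ} (f : (Fin n → Bool) → (Fin n → Bool))
    (x y : Fin n → Bool) : Prop :=
  ∃ i : Fin n, f x i ≠ x i ∧ y = Function.update x i (f x i)

/-- `w` is induced by a path of the `n`-cube. -/
def IsPathWord (n : ℕ) (w : List (Fin n)) : Prop :=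
  ∃ xs : List (Fin n → Bool), xs.Nodup ∧ xs.length = w.length + 1 ∧
    ∀ k (hk : k < w.length),
      xs.getD (k + 1) default =
        Function.update (xs.getD k default) (w.get ⟨k, hk⟩)
          (!(xs.getD k default (w.get ⟨k, hk⟩)))

/-- `W` contains every `n`-path-word as a subword. -/
def PathUniversal (n : ℕ) (W : List (Fin n)) : Prop :=
  ∀ w : List (Fin n), IsPathWord n w → w.Sublist W

/-- A word fixes the whole family of `n`-component asynchronous-acyclic networks. -/
def FixesAcyclicFamily (n : ℕ) (W : List (Fin n)) : Prop :=
  ∀ f : (Fin n → Bool) → (Fin n → Bool),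
    (∀ x, ¬ Relation.TransGen (AsyncArc f) x x) → Fixes f W

/- ### Auxiliary development -/

namespace PathAux

variable {n : ℕ}

/-- Flip coordinates along a word. -/
def flipWord : List (Fin n) → (Fin n → Bool) → (Fin n → Bool)
  | [], x => x
  | i :: w, x => flipWord w (Function.update x i (!x i))

/-- States visited along a flip-word. -/
def stateList : List (Fin n) → (Fin n → Bool) → List (Fin n → Bool)
  | [], x => [x]
  | i :: w, x => x :: stateList w (Function.update x i (!x i))

lemma stateList_length (w : List (Fin n)) (x : Fin n → Bool) :
    (stateList w x).length = w.length + 1 := by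
  induction w generalizing x with
  | nil => rfl
  | cons i w ih => simp [stateList, ih]

lemma stateList_getD_zero (w : List (Fin n)) (x : Fin n → Bool) :
    (stateList w x).getD 0 default = x := by
  cases w <;> rfl

lemma stateList_getD (w : List (Fin n)) (x : Fin n → Bool) :
    ∀ k (hk : k < w.length),
      (stateList w x).getD (k + 1) default =
        Function.update ((stateList w x).getD k default) (w.get ⟨k, hk⟩)
          (!((stateList w x).getD k default (w.get ⟨k, hk⟩))) := by
  induction w generalizing x with
  | nil => intro k hk; simp at hk
  | cons i w ih =>
    intro k hk
    cases k with
    | zero =>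
      simp only [stateList, List.getD_cons_succ, List.getD_cons_zero,
        stateList_getD_zero, List.get]
    | succ k =>
      have hk' : k < w.length := by simpa using hk
      simpa [stateList] using ih (Function.update x i (!x i)) k hk'

lemma bool_ne_iff {a b : Bool} : a ≠ b ↔ a = !b := by
  cases a <;> cases b <;> simp

/-- A word is an (effective) trajectory word of `f` from `x`. -/
def IsTraj (f : (Fin n → Bool) → (Fin n → Bool)) :
    List (Fin n) → (Fin n → Bool) → Prop
  | [], _ => True
  | i :: w, x => f x i ≠ x i ∧ IsTraj f w (Function.update x i (!x i))

lemma isTraj_append_single {f : (Fin n → Bool) → (Fin n → Bool)}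
    {u : List (Fin n)} {x : Fin n → Bool} {i : Fin n}
    (h : IsTraj f u x) (heff : f (flipWord u x) i ≠ flipWord u x i) :
    IsTraj f (u ++ [i]) x := by
  induction u generalizing x with
  | nil => exact ⟨heff, trivial⟩
  | cons j u ih => exact ⟨h.1, ih h.2 heff⟩

lemma flipWord_append_single (u : List (Fin n)) (x : Fin n → Bool) (i : Fin n) :
    flipWord (u ++ [i]) x
      = Function.update (flipWord u x) i (!(flipWord u x i)) := by
  induction u generalizing x with
  | nil => rfl
  | cons j u ih => simpa [flipWord] using ih _

lemma chain'_of_isTraj {f : (Fin n → Bool) → (Fin n → Bool)}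
    {u : List (Fin n)} {x : Fin n → Bool} (h : IsTraj f u x) :
    List.Chain' (AsyncArc f) (stateList u x) := by
  induction u generalizing x with
  | nil => exact List.isChain_singleton x
  | cons i u ih =>
    have heff : f x i ≠ x i := h.1
    have hfx : f x i = !x i := bool_ne_iff.mp heff
    have harc : AsyncArc f x (Function.update x i (!x i)) :=
      ⟨i, heff, by rw [hfx]⟩
    have hchain := ih h.2
    cases hu : stateList u (Function.update x i (!x i)) with
    | nil =>
      have := stateList_length u (Function.update x i (!x i))
      rw [hu] at this; simp at this
    | cons y ys =>
      have hy : y = Function.update x i (!x i) := by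
        have := stateList_getD_zero u (Function.update x i (!x i))
        rw [hu] at this; simpa using this
      rw [stateList, hu]
      exact List.IsChain.cons_cons (hy ▸ harc) (hu ▸ hchain)

lemma transGen_of_chain' {α : Type*} {r : α → α → Prop} {a b : α} {l : List α}
    (h : List.Chain' r (a :: l)) (hb : b ∈ l) : Relation.TransGen r a b := by
  induction l generalizing a with
  | nil => simp at hb
  | cons c l ih =>
    have hac : r a c := (List.isChain_cons_cons.mp h).1
    rcases List.mem_cons.mp hb with rfl | hb'
    · exact Relation.TransGen.single hac
    · exact (Relation.TransGen.single hac).trans (ih (List.isChain_cons_cons.mp h).2 hb')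

lemma nodup_of_chain' {α : Type*} {r : α → α → Prop}
    (hacyc : ∀ a, ¬ Relation.TransGen r a a) :
    ∀ {l : List α}, List.Chain' r l → l.Nodup := by
  intro l
  induction l with
  | nil => intro _; simp
  | cons a l ih =>
    intro h
    rw [List.nodup_cons]
    refine ⟨fun ha => hacyc a (transGen_of_chain' h ha), ih h.tail⟩

/-- Any trajectory word whose state list is duplicate-free is a path word. -/
lemma isPathWord_of_isTraj {f : (Fin n → Bool) → (Fin n → Bool)}
    {u : List (Fin n)} {x : Fin n → Bool} (h : IsTraj f u x)
    (hacyc : ∀ y, ¬ Relation.TransGen (AsyncArc f) y y) :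
    IsPathWord n u :=
  ⟨stateList u x, nodup_of_chain' hacyc (chain'_of_isTraj h),
    stateList_length u x, stateList_getD u x⟩

/-- The effective trace of a word. -/
def trace (f : (Fin n → Bool) → (Fin n → Bool)) :
    List (Fin n) → (Fin n → Bool) → List (Fin n)
  | [], _ => []
  | i :: W, x =>
    if f x i = x i then trace f W x else i :: trace f W (updateStep f x i)

lemma updateStep_eq_self {f : (Fin n → Bool) → (Fin n → Bool)} {x : Fin n → Bool}
    {i : Fin n} (h : f x i = x i) : updateStep f x i = x := by
  rw [updateStep, h, Function.update_eq_self]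

lemma applyWord_eq_flip (f : (Fin n → Bool) → (Fin n → Bool))
    (W : List (Fin n)) (x : Fin n → Bool) :
    applyWord f W x = flipWord (trace f W x) x := by
  induction W generalizing x with
  | nil => rfl
  | cons i W ih =>
    by_cases h : f x i = x i
    · rw [applyWord, updateStep_eq_self h, trace, if_pos h, ih]
    · have hfx : f x i = !x i := bool_ne_iff.mp h
      rw [applyWord, trace, if_neg h, ih]
      simp [flipWord, updateStep, hfx]

lemma isTraj_trace (f : (Fin n → Bool) → (Fin n → Bool))
    (W : List (Fin n)) (x : Fin n → Bool) : IsTraj f (trace f W x) x := by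
  induction W generalizing x with
  | nil => trivial
  | cons i W ih =>
    by_cases h : f x i = x i
    · rw [trace, if_pos h]; exact ih x
    · rw [trace, if_neg h]
      have hfx : f x i = !x i := bool_ne_iff.mp h
      refine ⟨h, ?_⟩
      have : updateStep f x i = Function.update x i (!x i) := by
        rw [updateStep, hfx]
      exact this ▸ ih (updateStep f x i)

lemma trace_head {f : (Fin n → Bool) → (Fin n → Bool)}
    {W : List (Fin n)} {x : Fin n → Bool} {j : Fin n} {r : List (Fin n)}
    (h : trace f W x = j :: r) : f x j ≠ x j := by
  induction W generalizing x with
  | nil => simp [trace] at h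
  | cons i W ih =>
    by_cases hi : f x i = x i
    · rw [trace, if_pos hi] at h; exact ih h
    · rw [trace, if_neg hi] at h
      obtain ⟨rfl, -⟩ := List.cons.injEq .. ▸ h
      exact (List.cons.injEq .. ▸ h).1 ▸ hi

lemma trace_nil {f : (Fin n → Bool) → (Fin n → Bool)}
    {W : List (Fin n)} {x : Fin n → Bool}
    (h : trace f W x = []) : applyWord f W x = x := by
  rw [applyWord_eq_flip, h]; rfl

/-- Key lemma: the effective trace extended by an effective letter is never a subword. -/
lemma not_sublist_trace {f : (Fin n → Bool) → (Fin n → Bool)} :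
    ∀ (W : List (Fin n)) (x : Fin n → Bool) (i : Fin n),
      f (applyWord f W x) i ≠ applyWord f W x i →
      ¬ (trace f W x ++ [i]).Sublist W := by
  intro W
  induction W with
  | nil => intro x i _ hs; simpa using List.sublist_nil.mp hs
  | cons j W ih =>
    intro x i heff hs
    by_cases hj : f x j = x j
    · rw [trace, if_pos hj] at hs
      have happ : applyWord f (j :: W) x = applyWord f W x := by
        rw [applyWord, updateStep_eq_self hj]
      rw [happ] at heff
      rcases List.sublist_cons_iff.mp hs with hs' | ⟨t, ht, hs'⟩
      · exact ih x i heff hs'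
      · -- trace f W x ++ [i] = j :: t
        cases htr : trace f W x with
        | nil =>
          rw [htr] at ht
          simp at ht
          obtain ⟨rfl, rfl⟩ := ht
          have := trace_nil htr
          rw [this] at heff
          exact heff hj
        | cons a r =>
          rw [htr] at ht
          have : a = j := by simpa using congrArg (·.head?) ht
          exact trace_head (this ▸ htr) (this ▸ hj)
    · rw [trace, if_neg hj] at hs
      have happ : applyWord f (j :: W) x = applyWord f W (updateStep f x j) := rfl
      rw [happ] at heff
      have hs' : (trace f W (updateStep f x j) ++ [i]).Sublist W := by
        have := hs
        rw [List.cons_append] at this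
        exact (List.cons_sublist_cons).mp this
      exact ih (updateStep f x j) i heff hs'

/-- Direction B: a path-universal word fixes every asynchronous-acyclic network. -/
lemma fixes_of_pathUniversal {W : List (Fin n)} (hW : PathUniversal n W) :
    FixesAcyclicFamily n W := by
  intro f hacyc x
  by_contra hne
  obtain ⟨i, hi⟩ := Function.ne_iff.mp hne
  have heq := applyWord_eq_flip f W x
  have htraj : IsTraj f (trace f W x ++ [i]) x :=
    isTraj_append_single (isTraj_trace f W x) (by rw [← heq]; exact hi)
  have hpw : IsPathWord n (trace f W x ++ [i]) := isPathWord_of_isTraj htraj hacyc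
  exact not_sublist_trace W x i hi (hW _ hpw)

end PathAux

namespace PathAux

variable {n : ℕ}

open Classical in
/-- The network that follows the path `xs`, flipping letter `wₖ` at state `xsₖ`. -/
noncomputable def pathNet (w : List (Fin n)) (xs : List (Fin n → Bool)) :
    (Fin n → Bool) → (Fin n → Bool) :=
  fun x i =>
    if ∃ k : Fin w.length, xs.getD k default = x ∧ w.get k = i then !x i else x i

section PathNet

variable {w : List (Fin n)} {xs : List (Fin n → Bool)}
  (hnd : xs.Nodup) (hlen : xs.length = w.length + 1)

/-- Injectivity of the path states. -/
lemma X_inj (hnd : xs.Nodup) (hlen : xs.length = w.length + 1)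
    {a b : ℕ} (ha : a ≤ w.length) (hb : b ≤ w.length)
    (h : xs.getD a default = xs.getD b default) : a = b := by
  have ha' : a < xs.length := by omega
  have hb' : b < xs.length := by omega
  rw [List.getD_eq_getElem _ _ ha', List.getD_eq_getElem _ _ hb'] at h
  exact (List.Nodup.getElem_inj_iff hnd).mp h

lemma pathNet_apply_ne (hnd : xs.Nodup) (hlen : xs.length = w.length + 1)
    {k : ℕ} (hk : k ≤ w.length) {i : Fin n}
    (hne : ∀ hk' : k < w.length, i ≠ w.get ⟨k, hk'⟩) :
    pathNet w xs (xs.getD k default) i = xs.getD k default i := by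
  rw [pathNet, if_neg]
  rintro ⟨k', hX, hw⟩
  have : (k' : ℕ) = k := X_inj hnd hlen (le_of_lt k'.isLt) hk hX
  subst this
  exact hne k'.isLt (by simp [← hw])

lemma pathNet_apply_eq {k : ℕ} (hk : k < w.length) :
    pathNet w xs (xs.getD k default) (w.get ⟨k, hk⟩)
      = !xs.getD k default (w.get ⟨k, hk⟩) := by
  rw [pathNet, if_pos ⟨⟨k, hk⟩, rfl, rfl⟩]

lemma pathNet_last (hnd : xs.Nodup) (hlen : xs.length = w.length + 1)
    (i : Fin n) :
    pathNet w xs (xs.getD w.length default) i = xs.getD w.length default i :=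
  pathNet_apply_ne hnd hlen le_rfl (fun hk _ => absurd hk (lt_irrefl _))

end PathNet

end PathAux

namespace PathAux

variable {n : ℕ} {w : List (Fin n)} {xs : List (Fin n → Bool)}

section Dyn

variable (hnd : xs.Nodup) (hlen : xs.length = w.length + 1)
  (hrec : ∀ k (hk : k < w.length),
      xs.getD (k + 1) default =
        Function.update (xs.getD k default) (w.get ⟨k, hk⟩)
          (!(xs.getD k default (w.get ⟨k, hk⟩))))

include hnd hlen

lemma updateStep_stay {k : ℕ} (hk : k ≤ w.length) {i : Fin n}
    (hne : ∀ hk' : k < w.length, i ≠ w.get ⟨k, hk'⟩) :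
    updateStep (pathNet w xs) (xs.getD k default) i = xs.getD k default := by
  rw [updateStep, pathNet_apply_ne hnd hlen hk hne, Function.update_eq_self]

include hrec

omit hnd hlen in
lemma updateStep_move {k : ℕ} (hk : k < w.length) :
    updateStep (pathNet w xs) (xs.getD k default) (w.get ⟨k, hk⟩)
      = xs.getD (k + 1) default := by
  rw [updateStep, pathNet_apply_eq hk, ← hrec k hk]

lemma asyncArc_pathNet {x y : Fin n → Bool}
    (h : AsyncArc (pathNet w xs) x y) :
    ∃ k, ∃ hk : k < w.length, x = xs.getD k default ∧ y = xs.getD (k + 1) default := by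
  obtain ⟨i, hne, hy⟩ := h
  have hcond : ∃ k : Fin w.length, xs.getD k default = x ∧ w.get k = i := by
    by_contra hc
    exact hne (by rw [pathNet, if_neg hc])
  obtain ⟨k, hX, hw⟩ := hcond
  refine ⟨k, k.isLt, hX.symm, ?_⟩
  have : y = updateStep (pathNet w xs) x i := hy
  rw [this, ← hX, ← hw, ← updateStep_move hrec k.isLt]

lemma transGen_pathNet {x y : Fin n → Bool}
    (h : Relation.TransGen (AsyncArc (pathNet w xs)) x y) :
    ∃ a b : ℕ, a < b ∧ b ≤ w.length ∧ x = xs.getD a default ∧ y = xs.getD b default := by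
  induction h with
  | single harc =>
    obtain ⟨k, hk, hx, hy⟩ := asyncArc_pathNet hnd hlen hrec harc
    exact ⟨k, k + 1, Nat.lt_succ_self k, hk, hx, hy⟩
  | tail _ harc ih =>
    obtain ⟨a, b, hab, hbL, hx, hz⟩ := ih
    obtain ⟨k, hk, hzk, hy⟩ := asyncArc_pathNet hnd hlen hrec harc
    have hbk : b = k := X_inj hnd hlen hbL (le_of_lt hk) (hz ▸ hzk ▸ rfl)
    exact ⟨a, k + 1, by omega, hk, hx, hy⟩

lemma pathNet_acyclic :
    ∀ x, ¬ Relation.TransGen (AsyncArc (pathNet w xs)) x x := by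
  intro x h
  obtain ⟨a, b, hab, hbL, hx, hx'⟩ := transGen_pathNet hnd hlen hrec h
  have : a = b := X_inj hnd hlen (by omega) hbL (hx ▸ hx' ▸ rfl)
  omega

lemma pathNet_dyn :
    ∀ (U : List (Fin n)) (k : ℕ), k ≤ w.length →
      ∃ m, k ≤ m ∧ m ≤ w.length ∧
        applyWord (pathNet w xs) U (xs.getD k default) = xs.getD m default ∧
        (List.take (m - k) (w.drop k)).Sublist U := by
  intro U
  induction U with
  | nil =>
    intro k hk
    exact ⟨k, le_rfl, hk, rfl, by simp⟩
  | cons i U ih =>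
    intro k hk
    by_cases hstep : ∃ hk' : k < w.length, i = w.get ⟨k, hk'⟩
    · obtain ⟨hk', rfl⟩ := hstep
      obtain ⟨m, hm1, hm2, hm3, hm4⟩ := ih (k + 1) hk'
      refine ⟨m, by omega, hm2, ?_, ?_⟩
      · rw [applyWord, updateStep_move hrec hk', hm3]
      · have hdrop : w.drop k = w.get ⟨k, hk'⟩ :: w.drop (k + 1) := by
          rw [List.drop_eq_getElem_cons hk']; rfl
        rw [hdrop]
        have : m - k = (m - (k + 1)) + 1 := by omega
        rw [this, List.take_succ_cons]
        exact List.Sublist.cons₂ _ hm4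
    · push_neg at hstep
      obtain ⟨m, hm1, hm2, hm3, hm4⟩ := ih k hk
      refine ⟨m, hm1, hm2, ?_, List.Sublist.cons _ hm4⟩
      rw [applyWord, updateStep_stay hnd hlen hk hstep, hm3]

/-- Direction A, core: a word fixing `pathNet` contains `w` as a subword. -/
lemma sublist_of_fixes_pathNet {W : List (Fin n)}
    (hfix : Fixes (pathNet w xs) W) : w.Sublist W := by
  obtain ⟨m, -, hm2, hm3, hm4⟩ := pathNet_dyn hnd hlen hrec W 0 (Nat.zero_le _)
  have hmL : m = w.length := by
    by_contra hne
    have hm : m < w.length := by omega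
    have := congrFun (hfix (xs.getD 0 default)) (w.get ⟨m, hm⟩)
    rw [hm3, pathNet_apply_eq hm] at this
    exact Bool.not_ne_self _ this
  rw [hmL] at hm4
  simpa using hm4

end Dyn

lemma pathUniversal_of_fixesAcyclic {W : List (Fin n)}
    (hW : FixesAcyclicFamily n W) : PathUniversal n W := by
  intro w hpw
  obtain ⟨xs, hnd, hlen, hrec⟩ := hpw
  exact sublist_of_fixes_pathNet hnd hlen hrec
    (hW _ (pathNet_acyclic hnd hlen hrec))

end PathAux

/-- every word fixing all asynchronous-acyclic `n`-component networks is
`n`-path-universal; consequently the fixing length of this family equals the minimum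
length `Λ(n)` of an `n`-path-universal word. -/
theorem fixing_length_acyclic_eq_pathUniversal (n : ℕ) :
    (∀ W : List (Fin n), FixesAcyclicFamily n W → PathUniversal n W) ∧
      sInf {l : ℕ | ∃ W : List (Fin n), W.length = l ∧ FixesAcyclicFamily n W} =
        sInf {l : ℕ | ∃ W : List (Fin n), W.length = l ∧ PathUniversal n W} := by
  refine ⟨fun W hW => PathAux.pathUniversal_of_fixesAcyclic hW, ?_⟩
  congr 1
  ext l
  constructor
  · rintro ⟨W, hl, hW⟩
    exact ⟨W, hl, PathAux.pathUniversal_of_fixesAcyclic hW⟩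
  · rintro ⟨W, hl, hW⟩
    exact ⟨W, hl, PathAux.fixes_of_pathUniversal hW⟩
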